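/- Let Ω_Bell = (1/3)·[(I₄ + X⊗X)/2 + (I₄ − Y⊗Y)/2 + (I₄ + Z⊗Z)/2] on ℂ⁴ and |Φ⁺⟩ = (|00⟩ + |11⟩)/√2. Then Ω_Bell|Φ⁺⟩ = |Φ⁺⟩, and the supremum of ⟨φ, Ω_Bell φ⟩ over unit vectors φ orthogonal to |Φ⁺⟩ equals 1/3. Consequently, for this strategy the minimum failure-detection probability is Δ_ε = (2/3)ε: for every density matrix σ with ⟨Φ⁺, σΦ⁺⟩ ≤ 1 − ε (ε ∈ (0,1]), tr(Ω_Bell σ) ≤ 1 − (2/3)ε, with equality attainable. -/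

import Mathlib

open Matrix Kronecker ComplexOrder

/-- The performance parameter `q(Ω, ψ)`: the supremum of `⟨φ, Ωφ⟩` over unit
vectors `φ` orthogonal to `ψ`. -/
noncomputable def qparam {n : Type*} [Fintype n] [DecidableEq n]
    (Ω : Matrix n n ℂ) (ψ : n → ℂ) : ℝ :=
  sSup {x : ℝ | ∃ φ : n → ℂ, star φ ⬝ᵥ φ = 1 ∧ star ψ ⬝ᵥ φ = 0 ∧
    x = (star φ ⬝ᵥ (Ω *ᵥ φ)).re}

/-- Pauli X. -/
def pauliX : Matrix (Fin 2) (Fin 2) ℂ := !![0, 1; 1, 0]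

/-- Pauli Y. -/
def pauliY : Matrix (Fin 2) (Fin 2) ℂ := !![0, -Complex.I; Complex.I, 0]

/-- Pauli Z. -/
def pauliZ : Matrix (Fin 2) (Fin 2) ℂ := !![1, 0; 0, -1]

/-- The Bell state `|Φ⁺⟩ = (|00⟩ + |11⟩)/√2` in `ℂ²⊗ℂ²`. -/
noncomputable def bell : Fin 2 × Fin 2 → ℂ :=
  fun p => if p.1 = p.2 then ((1 / Real.sqrt 2 : ℝ) : ℂ) else 0

/-- The Bell-state verification strategy: uniform mixture of the projectors onto the
positive eigenspaces of `XX`, `−YY` and `ZZ`. -/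
noncomputable def ΩBell : Matrix (Fin 2 × Fin 2) (Fin 2 × Fin 2) ℂ :=
  (1/3 : ℂ) • ((1/2 : ℂ) • ((1 : Matrix (Fin 2 × Fin 2) (Fin 2 × Fin 2) ℂ) + pauliX ⊗ₖ pauliX)
    + (1/2 : ℂ) • ((1 : Matrix (Fin 2 × Fin 2) (Fin 2 × Fin 2) ℂ) - pauliY ⊗ₖ pauliY)
    + (1/2 : ℂ) • ((1 : Matrix (Fin 2 × Fin 2) (Fin 2 × Fin 2) ℂ) + pauliZ ⊗ₖ pauliZ))

/-! ### Auxiliary material -/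

/-- The flag state `|01⟩`. -/
noncomputable def phi0 : Fin 2 × Fin 2 → ℂ := fun p => if p = (0,1) then 1 else 0

lemma outer_mulVec {n : Type*} [Fintype n] (v w x : n → ℂ) :
    vecMulVec v w *ᵥ x = (w ⬝ᵥ x) • v := by
  ext i
  simp only [mulVec, vecMulVec_apply, dotProduct, Pi.smul_apply, smul_eq_mul, Finset.sum_mul]
  exact Finset.sum_congr rfl fun j _ => by ring

lemma star_dot {n : Type*} [Fintype n] (v x : n → ℂ) :
    star x ⬝ᵥ v = star (star v ⬝ᵥ x) := by
  simp [dotProduct, map_sum, mul_comm]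

lemma trace_outer_mul {n : Type*} [Fintype n] (v w : n → ℂ)
    (σ : Matrix n n ℂ) : (vecMulVec v w * σ).trace = w ⬝ᵥ (σ *ᵥ v) := by
  simp only [Matrix.trace, diag_apply, Matrix.mul_apply, vecMulVec_apply, dotProduct, mulVec]
  rw [Finset.sum_comm]
  exact Finset.sum_congr rfl fun j _ => by
    rw [Finset.mul_sum]; exact Finset.sum_congr rfl fun i _ => by ring

lemma trace_outer {n : Type*} [Fintype n] (v w : n → ℂ) :
    (vecMulVec v w).trace = w ⬝ᵥ v := by
  simp [Matrix.trace, vecMulVec_apply, dotProduct, mul_comm]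

lemma psd_outer {n : Type*} [Fintype n] (r : ℝ) (hr : 0 ≤ r) (v : n → ℂ) :
    ((r : ℂ) • vecMulVec v (star v)).PosSemidef := by
  rw [posSemidef_iff_dotProduct_mulVec]
  constructor
  · ext i j
    simp [vecMulVec_apply, conjTranspose_apply, mul_comm, Complex.conj_ofReal, mul_assoc]
  · intro x
    rw [smul_mulVec, outer_mulVec, dotProduct_smul, dotProduct_smul, smul_eq_mul,
      smul_eq_mul, star_dot]
    exact mul_nonneg (by exact_mod_cast Complex.zero_le_real.2 hr)
      (star_mul_self_nonneg _)

lemma bell_norm : star bell ⬝ᵥ bell = 1 := by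
  simp [dotProduct, bell, Fintype.sum_prod_type, Fin.sum_univ_two, Complex.conj_ofReal]
  norm_num [← Complex.ofReal_inv, ← Complex.ofReal_mul, ← mul_inv, Real.mul_self_sqrt]

lemma phi0_norm : star phi0 ⬝ᵥ phi0 = 1 := by
  simp [dotProduct, phi0, Fintype.sum_prod_type, Fin.sum_univ_two, Prod.ext_iff]

lemma bell_phi0 : star bell ⬝ᵥ phi0 = 0 := by
  simp [dotProduct, bell, phi0, Fintype.sum_prod_type, Fin.sum_univ_two, Prod.ext_iff]

lemma phi0_bell : star phi0 ⬝ᵥ bell = 0 := by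
  simp [dotProduct, bell, phi0, Fintype.sum_prod_type, Fin.sum_univ_two, Prod.ext_iff]

/-- Structural identity: `ΩBell = (2/3)|Φ⁺⟩⟨Φ⁺| + (1/3)·I`. -/
lemma ΩBell_eq : ΩBell = (2/3 : ℂ) • vecMulVec bell (star bell) + (1/3 : ℂ) • 1 := by
  ext ⟨i,j⟩ ⟨k,l⟩
  fin_cases i <;> fin_cases j <;> fin_cases k <;> fin_cases l <;>
    simp [ΩBell, pauliX, pauliY, pauliZ, bell, vecMulVec_apply, Matrix.one_apply,
      kroneckerMap_apply, Prod.ext_iff, Complex.ext_iff] <;>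
    norm_num [div_mul_div_comm, Real.mul_self_sqrt]

lemma key_quad (φ : Fin 2 × Fin 2 → ℂ) (h1 : star φ ⬝ᵥ φ = 1)
    (h2 : star bell ⬝ᵥ φ = 0) : star φ ⬝ᵥ (ΩBell *ᵥ φ) = 1/3 := by
  rw [ΩBell_eq, add_mulVec, smul_mulVec, smul_mulVec, one_mulVec, outer_mulVec,
    h2, zero_smul, smul_zero, zero_add, dotProduct_smul, h1]
  norm_num

lemma trace_Ω (σ : Matrix (Fin 2 × Fin 2) (Fin 2 × Fin 2) ℂ) :
    (ΩBell * σ).trace = (2/3 : ℂ) * (star bell ⬝ᵥ (σ *ᵥ bell)) + (1/3 : ℂ) * σ.trace := by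
  rw [ΩBell_eq, add_mul, smul_mul_assoc, smul_mul_assoc, one_mul, trace_add, trace_smul,
    trace_smul, trace_outer_mul]
  simp [smul_eq_mul]

theorem stmt_4 :
    ΩBell *ᵥ bell = bell ∧
    qparam ΩBell bell = 1/3 ∧
    ∀ ε : ℝ, 0 < ε → ε ≤ 1 →
      (∀ σ : Matrix (Fin 2 × Fin 2) (Fin 2 × Fin 2) ℂ, σ.PosSemidef → σ.trace = 1 →
        (star bell ⬝ᵥ (σ *ᵥ bell)).re ≤ 1 - ε →
        (ΩBell * σ).trace.re ≤ 1 - (2/3) * ε) ∧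
      (∃ σ : Matrix (Fin 2 × Fin 2) (Fin 2 × Fin 2) ℂ, σ.PosSemidef ∧ σ.trace = 1 ∧
        (star bell ⬝ᵥ (σ *ᵥ bell)).re ≤ 1 - ε ∧
        (ΩBell * σ).trace.re = 1 - (2/3) * ε) := by
  have tre : ∀ z : ℂ, ((2/3 : ℂ) * z + (1/3 : ℂ) * 1).re = 2/3 * z.re + 1/3 := by
    intro z
    rw [mul_one, show (2/3 : ℂ) = ((2/3 : ℝ) : ℂ) by norm_num,
      show (1/3 : ℂ) = ((1/3 : ℝ) : ℂ) by norm_num, Complex.add_re, Complex.mul_re,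
      Complex.ofReal_re, Complex.ofReal_im, zero_mul, sub_zero, Complex.ofReal_re]
  refine ⟨?_, ?_, ?_⟩
  · rw [ΩBell_eq, add_mulVec, smul_mulVec, smul_mulVec, one_mulVec, outer_mulVec,
      bell_norm, one_smul]
    ext p
    simp only [Pi.add_apply, Pi.smul_apply, smul_eq_mul]
    ring
  · have hset : {x : ℝ | ∃ φ : Fin 2 × Fin 2 → ℂ, star φ ⬝ᵥ φ = 1 ∧ star bell ⬝ᵥ φ = 0 ∧
        x = (star φ ⬝ᵥ (ΩBell *ᵥ φ)).re} = {1/3} := by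
      ext x
      simp only [Set.mem_setOf_eq, Set.mem_singleton_iff]
      constructor
      · rintro ⟨φ, h1, h2, rfl⟩
        rw [key_quad φ h1 h2]
        norm_num
      · rintro rfl
        exact ⟨phi0, phi0_norm, bell_phi0, by rw [key_quad phi0 phi0_norm bell_phi0]; norm_num⟩
    rw [qparam, hset, csSup_singleton]
  · intro ε hε hε1
    constructor
    · intro σ _ htr hF
      rw [trace_Ω, htr, tre]
      linarith
    · set σ₀ : Matrix (Fin 2 × Fin 2) (Fin 2 × Fin 2) ℂ :=
        ((1 - ε : ℝ) : ℂ) • vecMulVec bell (star bell)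
          + ((ε : ℝ) : ℂ) • vecMulVec phi0 (star phi0) with hσ₀
      have htr : σ₀.trace = 1 := by
        rw [hσ₀, trace_add, trace_smul, trace_smul, trace_outer, trace_outer, bell_norm,
          phi0_norm, smul_eq_mul, smul_eq_mul, mul_one, mul_one]
        push_cast
        ring
      have hF : star bell ⬝ᵥ (σ₀ *ᵥ bell) = ((1 - ε : ℝ) : ℂ) := by
        rw [hσ₀, add_mulVec, smul_mulVec, smul_mulVec, outer_mulVec, outer_mulVec,
          bell_norm, phi0_bell, one_smul, zero_smul, smul_zero, add_zero, dotProduct_smul,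
          bell_norm, smul_eq_mul, mul_one]
      refine ⟨σ₀, (psd_outer _ (by linarith) _).add (psd_outer _ (by linarith) _),
        htr, ?_, ?_⟩
      · rw [hF, Complex.ofReal_re]
      · rw [trace_Ω, htr, hF, tre, Complex.ofReal_re]
        ring
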